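/- Let X¹, …, X^N be i.i.d. ℝ^d-valued random vectors with joint density f(x) = ∏_{k=1}^d f_k(x_k), f_k > 0 almost everywhere, g: ℝ^d → ℝ measurable, and f̃ a probability density on ℝ with square-integrable likelihood ratio on the failure region. Let p̂_f = (1/N) Σ_k 1_{g(X^k) ≤ 0} and p̂_{iδ} = (1/N) Σ_k 1_{g(X^k) ≤ 0} f̃(X^k_i)/f_i(X^k_i) be computed from the same sample. Then Cov(p̂_f, p̂_{iδ}) = (1/N) p_{iδ} (1 − p_f). -/

import Mathlib

open MeasureTheory ProbabilityTheory
open scoped ENNReal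

/-- Let `X¹, …, X^N` be i.i.d. random vectors on `ℝ^d` with joint density
`f(x) = ∏_k f_k(x_k)`, `f_k > 0` a.e., `g : ℝ^d → ℝ` measurable, and `f̃` a probability
density on `ℝ` with square-integrable likelihood ratio on the failure region.  Let
`p̂_f = (1/N) Σ_k 1_{g(X^k) ≤ 0}` and
`p̂_{iδ} = (1/N) Σ_k 1_{g(X^k) ≤ 0} f̃(X^k_i)/f_i(X^k_i)` be computed from the same
sample.  Then `Cov(p̂_f, p̂_{iδ}) = E[p̂_f p̂_{iδ}] − E[p̂_f] E[p̂_{iδ}] = (1/N) p_{iδ} (1 − p_f)`. -/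
theorem stmt16 {Ω : Type*} [MeasurableSpace Ω] (P : Measure Ω) [IsProbabilityMeasure P]
    (d N : ℕ) (hN : 0 < N) (i : Fin d) (f : Fin d → ℝ → ℝ) (ftilde : ℝ → ℝ)
    (hf_meas : ∀ k, Measurable (f k)) (hf_nonneg : ∀ k x, 0 ≤ f k x)
    (hf_int : ∀ k, ∫ x : ℝ, f k x = 1)
    (hft_meas : Measurable ftilde) (hft_nonneg : ∀ x, 0 ≤ ftilde x)
    (hft_int : ∫ x : ℝ, ftilde x = 1)
    (hpos : ∀ᵐ x : ℝ, 0 < f i x)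
    (g : (Fin d → ℝ) → ℝ) (hg : Measurable g)
    (X : Fin N → Ω → (Fin d → ℝ)) (hX : ∀ k, Measurable (X k))
    (hiid : iIndepFun X P)
    (hlaw : ∀ k, Measure.map (X k) P =
      (Measure.pi fun _ => (volume : Measure ℝ)).withDensity
        (fun x => ENNReal.ofReal (∏ j, f j (x j))))
    (hsq : Integrable
      (fun x => Set.indicator {y | g y ≤ 0}
          (fun y => (ftilde (y i) / f i (y i)) ^ 2 * ∏ j, f j (y j)) x)
      (Measure.pi fun _ => (volume : Measure ℝ))) :
    (∫ ω, ((1 / (N : ℝ)) * ∑ k, Set.indicator {y | g y ≤ 0} (fun _ => (1 : ℝ)) (X k ω)) *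
        ((1 / (N : ℝ)) * ∑ k, Set.indicator {y | g y ≤ 0}
          (fun y => ftilde (y i) / f i (y i)) (X k ω)) ∂P) -
      (∫ ω, (1 / (N : ℝ)) * ∑ k,
          Set.indicator {y | g y ≤ 0} (fun _ => (1 : ℝ)) (X k ω) ∂P) *
        (∫ ω, (1 / (N : ℝ)) * ∑ k, Set.indicator {y | g y ≤ 0}
          (fun y => ftilde (y i) / f i (y i)) (X k ω) ∂P) =
    (1 / (N : ℝ)) *
      (∫ x, Set.indicator {y | g y ≤ 0}
          (fun y => ftilde (y i) * ∏ j ∈ Finset.univ.erase i, f j (y j)) x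
          ∂(Measure.pi fun _ => (volume : Measure ℝ))) *
      (1 - ∫ x, Set.indicator {y | g y ≤ 0} (fun y => ∏ j, f j (y j)) x
          ∂(Measure.pi fun _ => (volume : Measure ℝ))) := by
  classical
  set π : Measure (Fin d → ℝ) := Measure.pi fun _ => (volume : Measure ℝ) with hπdef
  set w : (Fin d → ℝ) → ℝ := fun x => ∏ j, f j (x j) with hwdef
  have hw_meas : Measurable w :=
    Finset.measurable_prod _ fun j _ => (hf_meas j).comp (measurable_pi_apply j)
  have hw_nonneg : ∀ x, 0 ≤ w x := fun x => Finset.prod_nonneg fun j _ => hf_nonneg j _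
  set μ : Measure (Fin d → ℝ) := π.withDensity fun x => ENNReal.ofReal (w x) with hμdef
  have hlaw' : ∀ k, Measure.map (X k) P = μ := hlaw
  have hwd : (fun x => ENNReal.ofReal (w x)) = fun x => ((w x).toNNReal : ℝ≥0∞) := rfl
  -- transfer integrals between μ and π
  have key : ∀ h : (Fin d → ℝ) → ℝ, ∫ x, h x ∂μ = ∫ x, w x * h x ∂π := by
    intro h
    rw [hμdef, hwd, integral_withDensity_eq_integral_smul hw_meas.real_toNNReal h]
    refine integral_congr_ae (Filter.Eventually.of_forall fun x => ?_)
    simp [NNReal.smul_def, Real.coe_toNNReal _ (hw_nonneg x)]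
  have keyInt : ∀ h : (Fin d → ℝ) → ℝ,
      Integrable h μ ↔ Integrable (fun x => w x * h x) π := by
    intro h
    rw [hμdef, hwd, integrable_withDensity_iff_integrable_smul hw_meas.real_toNNReal]
    constructor <;> intro h' <;> refine h'.congr (Filter.Eventually.of_forall fun x => ?_) <;>
      simp [NNReal.smul_def, Real.coe_toNNReal _ (hw_nonneg x)]
  set S : Set (Fin d → ℝ) := {y | g y ≤ 0} with hSdef
  have hS : MeasurableSet S := measurableSet_le hg measurable_const
  set A : (Fin d → ℝ) → ℝ := S.indicator (fun _ => (1 : ℝ)) with hAdef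
  set r : (Fin d → ℝ) → ℝ := fun y => ftilde (y i) / f i (y i) with hrdef
  set B : (Fin d → ℝ) → ℝ := S.indicator r with hBdef
  have hA_meas : Measurable A := measurable_const.indicator hS
  have hr_meas : Measurable r :=
    (hft_meas.comp (measurable_pi_apply i)).div ((hf_meas i).comp (measurable_pi_apply i))
  have hB_meas : Measurable B := hr_meas.indicator hS
  have hμprob : IsProbabilityMeasure μ := by
    have := Measure.isProbabilityMeasure_map (μ := P) (hX ⟨0, hN⟩).aemeasurable
    rwa [hlaw' ⟨0, hN⟩] at this
  -- integrability of A and B w.r.t. μ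
  have hIAμ : Integrable A μ := (integrable_const (1 : ℝ)).indicator hS
  have hIB2π : Integrable (fun x => w x * (B x) ^ 2) π := by
    refine hsq.congr (Filter.Eventually.of_forall fun x => ?_)
    by_cases hx : x ∈ S <;> simp [hBdef, Set.indicator_apply, hx, mul_comm, hrdef, hwdef]
  have hIBμ : Integrable B μ := by
    have h2 : Integrable (fun x => (B x) ^ 2) μ := (keyInt _).mpr hIB2π
    exact MemLp.integrable one_le_two
      ((memLp_two_iff_integrable_sq hB_meas.aestronglyMeasurable).2 h2)
  -- the two key integral values
  set pf : ℝ := ∫ x, S.indicator w x ∂π with hpfdef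
  set pδ : ℝ :=
    ∫ x, S.indicator (fun y => ftilde (y i) * ∏ j ∈ Finset.univ.erase i, f j (y j)) x ∂π
    with hpδdef
  have hμA : ∫ x, A x ∂μ = pf := by
    rw [key]
    refine integral_congr_ae (Filter.Eventually.of_forall fun x => ?_)
    by_cases hx : x ∈ S <;> simp [hAdef, Set.indicator_apply, hx]
  -- a.e. positivity of f i (x i) w.r.t. π
  have hnull : π {x : Fin d → ℝ | ¬ 0 < f i (x i)} = 0 := by
    have hvol : (volume : Measure ℝ) {t | ¬ 0 < f i t} = 0 := by
      simpa [ae_iff] using hpos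
    have hset : {x : Fin d → ℝ | ¬ 0 < f i (x i)} =
        Set.pi Set.univ (fun j => if j = i then {t | ¬ 0 < f i t} else Set.univ) := by
      ext x
      simp only [Set.mem_pi, Set.mem_univ, Set.mem_setOf_eq, true_implies]
      constructor
      · intro h j
        by_cases hj : j = i
        · subst hj; simpa using h
        · simp [hj]
      · intro h
        have := h i
        simpa using this
    rw [hset, hπdef, Measure.pi_pi]
    refine Finset.prod_eq_zero (Finset.mem_univ i) ?_
    simpa [not_lt] using hvol
  have hae : ∀ᵐ x ∂π, 0 < f i (x i) := by
    rw [ae_iff]; exact hnull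
  have hμB : ∫ x, B x ∂μ = pδ := by
    rw [key]
    refine integral_congr_ae ?_
    filter_upwards [hae] with x hx
    by_cases hxS : x ∈ S
    · simp only [hBdef, Set.indicator_of_mem hxS, hrdef, hwdef]
      rw [← Finset.mul_prod_erase Finset.univ (fun j => f j (x j)) (Finset.mem_univ i)]
      field_simp
    · simp [hBdef, Set.indicator_of_notMem hxS]
  -- pull back to Ω
  have hEA : ∀ k, ∫ ω, A (X k ω) ∂P = pf := by
    intro k
    rw [← integral_map (hX k).aemeasurable hA_meas.aestronglyMeasurable, hlaw' k, hμA]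
  have hEB : ∀ k, ∫ ω, B (X k ω) ∂P = pδ := by
    intro k
    rw [← integral_map (hX k).aemeasurable hB_meas.aestronglyMeasurable, hlaw' k, hμB]
  have hIA : ∀ k, Integrable (fun ω => A (X k ω)) P := by
    intro k
    have := (integrable_map_measure hA_meas.aestronglyMeasurable (hX k).aemeasurable).mp
      (by rw [hlaw' k]; exact hIAμ)
    exact this
  have hIB : ∀ k, Integrable (fun ω => B (X k ω)) P := by
    intro k
    have := (integrable_map_measure hB_meas.aestronglyMeasurable (hX k).aemeasurable).mp
      (by rw [hlaw' k]; exact hIBμ)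
    exact this
  have hA01 : ∀ x, |A x| ≤ 1 := by
    intro x
    by_cases hx : x ∈ S <;> simp [hAdef, Set.indicator_apply, hx]
  have hIAB : ∀ k l, Integrable (fun ω => A (X k ω) * B (X l ω)) P := by
    intro k l
    refine (hIB l).abs.mono'
      (((hA_meas.comp (hX k)).mul (hB_meas.comp (hX l))).aestronglyMeasurable) ?_
    refine Filter.Eventually.of_forall fun ω => ?_
    rw [Real.norm_eq_abs, abs_mul]
    calc |A (X k ω)| * |B (X l ω)| ≤ 1 * |B (X l ω)| :=
          mul_le_mul_of_nonneg_right (hA01 _) (abs_nonneg _)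
      _ = |B (X l ω)| := one_mul _
  have hdiag : ∀ x, A x * B x = B x := by
    intro x
    by_cases hx : x ∈ S <;> simp [hAdef, hBdef, Set.indicator_apply, hx]
  have hmul : ∀ k l, k ≠ l → ∫ ω, A (X k ω) * B (X l ω) ∂P = pf * pδ := by
    intro k l hkl
    have hind : IndepFun (fun ω => A (X k ω)) (fun ω => B (X l ω)) P :=
      (hiid.indepFun hkl).comp hA_meas hB_meas
    have := hind.integral_mul_eq_mul_integral ((hA_meas.comp (hX k)).aestronglyMeasurable)
      ((hB_meas.comp (hX l)).aestronglyMeasurable)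
    calc ∫ ω, A (X k ω) * B (X l ω) ∂P
        = (∫ ω, A (X k ω) ∂P) * ∫ ω, B (X l ω) ∂P := this
      _ = pf * pδ := by rw [hEA, hEB]
  -- each term of the double sum
  have hterm : ∀ k l : Fin N, ∫ ω, A (X k ω) * B (X l ω) ∂P =
      pf * pδ + if k = l then pδ - pf * pδ else 0 := by
    intro k l
    by_cases hkl : k = l
    · subst hkl
      have : (fun ω => A (X k ω) * B (X k ω)) = fun ω => B (X k ω) := by
        funext ω; exact hdiag _
      rw [this, hEB, if_pos rfl]; ring
    · rw [hmul k l hkl, if_neg hkl]; ring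
  -- expectation of each estimator
  have hEsumA : ∫ ω, (1 / (N : ℝ)) * ∑ k, A (X k ω) ∂P = (1 / (N : ℝ)) * (N * pf) := by
    rw [integral_const_mul, integral_finset_sum _ fun k _ => hIA k]
    simp [hEA, Finset.sum_const, mul_comm]
  have hEsumB : ∫ ω, (1 / (N : ℝ)) * ∑ k, B (X k ω) ∂P = (1 / (N : ℝ)) * (N * pδ) := by
    rw [integral_const_mul, integral_finset_sum _ fun k _ => hIB k]
    simp [hEB, Finset.sum_const, mul_comm]
  -- expectation of the product
  have hprod : ∫ ω, ((1 / (N : ℝ)) * ∑ k, A (X k ω)) *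
      ((1 / (N : ℝ)) * ∑ k, B (X k ω)) ∂P =
      (1 / (N : ℝ)) * (1 / (N : ℝ)) *
        ((N : ℝ) * (N : ℝ) * (pf * pδ) + (N : ℝ) * (pδ - pf * pδ)) := by
    have hrw : ∀ ω, ((1 / (N : ℝ)) * ∑ k, A (X k ω)) * ((1 / (N : ℝ)) * ∑ k, B (X k ω)) =
        (1 / (N : ℝ)) * (1 / (N : ℝ)) * ∑ k, ∑ l, A (X k ω) * B (X l ω) := by
      intro ω
      rw [← Finset.sum_mul_sum]
      ring
    simp_rw [hrw]
    rw [integral_const_mul,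
      integral_finset_sum _ fun k _ => integrable_finset_sum _ fun l _ => hIAB k l]
    congr 1
    have : ∀ k : Fin N, ∫ ω, ∑ l, A (X k ω) * B (X l ω) ∂P =
        ∑ l, ∫ ω, A (X k ω) * B (X l ω) ∂P :=
      fun k => integral_finset_sum _ fun l _ => hIAB k l
    simp_rw [this, hterm]
    rw [Finset.sum_congr rfl (fun k _ => Finset.sum_add_distrib)]
    simp [Finset.sum_const, Finset.sum_ite_eq, Finset.mul_sum]
    ring
  -- put everything together
  rw [hprod, hEsumA, hEsumB]
  have hN' : (N : ℝ) ≠ 0 := Nat.cast_ne_zero.mpr hN.ne'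
  show _ = (1 / (N : ℝ)) * pδ * (1 - pf)
  field_simp
  ring
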